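/- arXiv:1301.3589 — 2 statements merged into one kernel-verified Lean document; each statement's English description precedes it below -/
import Mathlib

section
/- Let 0 < b < a, m > 0, and for x = (x₁,x₂,x₃) outside the closed prolate spheroid define φ(x) = (4π a b² m/(a² − b²)^{3/2}) (artanh(t) − t) x₃, where t = √(a² − b²)/√(ξ(x)). Then there exist a constant c > 0 proportional to m a b² and a constant C > 0 depending only on a and b such that for all |x| ≥ 2a: |φ(x) − c x₃/|x|³| ≤ C m |x₃| a⁵/|x|⁵, and |∇φ(x)| ≤ C m a b²/|x|³. -/
open MeasureTheory Filter Metric Set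
open scoped RealInnerProductSpace ENNReal NNReal Topology

noncomputable section

/-- Euclidean three-space. -/
abbrev E3 : Type := EuclideanSpace ℝ (Fin 3)

/-- The closed prolate spheroid centered at the origin with semi-axis `A` along the
`x`- and `y`-directions and semi-axis `B` along the `z`-direction. -/
def sph (A B : ℝ) : Set E3 :=
  {x : E3 | (x 0) ^ 2 / A ^ 2 + (x 1) ^ 2 / A ^ 2 + (x 2) ^ 2 / B ^ 2 ≤ 1}

/-- The boundary surface of the spheroid `sph A B`. -/
def sphS (A B : ℝ) : Set E3 :=
  {x : E3 | (x 0) ^ 2 / A ^ 2 + (x 1) ^ 2 / A ^ 2 + (x 2) ^ 2 / B ^ 2 = 1}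

/-- Gradient of the defining function of the spheroid (up to a factor `2`). -/
def sphGrad (A B : ℝ) (x : E3) : E3 :=
  (WithLp.equiv 2 (Fin 3 → ℝ)).symm ![x 0 / A ^ 2, x 1 / A ^ 2, x 2 / B ^ 2]

/-- Outward unit normal to the surface of the spheroid `sph A B`. -/
def sphN (A B : ℝ) (x : E3) : E3 := ‖sphGrad A B x‖⁻¹ • sphGrad A B x

/-- Inverse hyperbolic tangent. -/
def artanh (t : ℝ) : ℝ := (1 / 2) * Real.log ((1 + t) / (1 - t))

/-! ### auxiliary -/

def prj (i : Fin 3) : E3 →L[ℝ] ℝ := EuclideanSpace.proj (𝕜 := ℝ) i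

lemma prj_apply (i : Fin 3) (y : E3) : prj i y = y i := rfl

lemma hasFDerivAt_coord (i : Fin 3) (x : E3) : HasFDerivAt (fun y : E3 => y i) (prj i) x :=
  (prj i).hasFDerivAt

lemma abs_coord_le (i : Fin 3) (y : E3) : |y i| ≤ ‖y‖ := by
  rw [EuclideanSpace.norm_eq, ← Real.sqrt_sq_eq_abs]
  apply Real.sqrt_le_sqrt
  have h : (y i)^2 = ‖y i‖^2 := by simp [Real.norm_eq_abs, sq_abs]
  rw [h]
  exact Finset.single_le_sum (f := fun j => ‖y j‖^2) (fun j _ => by positivity) (Finset.mem_univ i)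

lemma norm_prj_le (i : Fin 3) : ‖prj i‖ ≤ 1 := by
  apply ContinuousLinearMap.opNorm_le_bound _ zero_le_one
  intro y
  rw [prj_apply, one_mul, Real.norm_eq_abs]
  exact abs_coord_le i y

def r2 (y : E3) : ℝ := (y 0)^2 + (y 1)^2 + (y 2)^2

lemma r2_eq (y : E3) : r2 y = ‖y‖^2 := by
  rw [EuclideanSpace.norm_eq, Real.sq_sqrt (by positivity)]
  simp [r2, Fin.sum_univ_three, Real.norm_eq_abs, sq_abs]

lemma r2_nonneg (y : E3) : 0 ≤ r2 y := by rw [r2_eq]; positivity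

def Df (e : ℝ) (y : E3) : ℝ := (r2 y + e^2)^2 - 4*e^2*(y 2)^2

def gf (e : ℝ) (y : E3) : ℝ := (r2 y + e^2 + Real.sqrt (Df e y))/2

def Dr2 (x : E3) : E3 →L[ℝ] ℝ := (2*x 0) • prj 0 + (2*x 1) • prj 1 + (2*x 2) • prj 2

def DD (e : ℝ) (x : E3) : E3 →L[ℝ] ℝ := (2*(r2 x + e^2)) • Dr2 x - (8*e^2*x 2) • prj 2

def DG (e : ℝ) (x : E3) : E3 →L[ℝ] ℝ :=
  (2:ℝ)⁻¹ • (Dr2 x + (2 * Real.sqrt (Df e x))⁻¹ • DD e x)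

lemma hasFDerivAt_r2 (x : E3) : HasFDerivAt r2 (Dr2 x) x := by
  have h0 := hasFDerivAt_coord 0 x
  have h1 := hasFDerivAt_coord 1 x
  have h2 := hasFDerivAt_coord 2 x
  have key := ((h0.mul h0).add (h1.mul h1)).add (h2.mul h2)
  have hfun : r2 = fun y : E3 => (y 0)*(y 0) + (y 1)*(y 1) + (y 2)*(y 2) := by
    funext y; simp [r2]; ring
  rw [hfun]
  refine key.congr_fderiv ?_
  ext v
  simp [Dr2, prj_apply]
  ring

lemma hasFDerivAt_Df (e : ℝ) (x : E3) : HasFDerivAt (Df e) (DD e x) x := by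
  have hu : HasFDerivAt (fun y : E3 => r2 y + e^2) (Dr2 x) x := (hasFDerivAt_r2 x).add_const _
  have h2 := hasFDerivAt_coord 2 x
  have key := (hu.mul hu).sub (((h2.mul h2)).const_mul (4*e^2))
  have hfun : Df e = fun y : E3 => (r2 y + e^2)*(r2 y + e^2) - 4*e^2*((y 2)*(y 2)) := by
    funext y; simp [Df]; ring
  rw [hfun]
  refine key.congr_fderiv ?_
  ext v
  simp [DD, prj_apply]
  ring

lemma hasFDerivAt_gf (e : ℝ) (x : E3) (hD : Df e x ≠ 0) : HasFDerivAt (gf e) (DG e x) x := by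
  have hs : HasFDerivAt (fun y : E3 => Real.sqrt (Df e y))
      ((1 / (2 * Real.sqrt (Df e x))) • DD e x) x :=
    (Real.hasDerivAt_sqrt hD).comp_hasFDerivAt x (hasFDerivAt_Df e x)
  have key := (((hasFDerivAt_r2 x).add_const (e^2)).add hs).const_mul ((2:ℝ)⁻¹)
  have hfun : gf e = fun y : E3 => (2:ℝ)⁻¹ * (r2 y + e^2 + Real.sqrt (Df e y)) := by
    funext y; simp [gf]; ring
  rw [hfun]
  refine key.congr_fderiv ?_
  ext v
  simp [DG, prj_apply]

lemma hasDerivAt_artanh {u : ℝ} (h1 : -1 < u) (h2 : u < 1) :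
    HasDerivAt artanh (1 / (1 - u ^ 2)) u := by
  have hp : (0:ℝ) < 1 + u := by linarith
  have hq : (0:ℝ) < 1 - u := by linarith
  have key : ∀ᶠ v in nhds u, artanh v = (1/2) * (Real.log (1 + v) - Real.log (1 - v)) := by
    have h : ∀ᶠ v in nhds u, (-1 < v ∧ v < 1) := by
      filter_upwards [eventually_gt_nhds h1, eventually_lt_nhds h2] with v hv1 hv2
      exact ⟨hv1, hv2⟩
    filter_upwards [h] with v hv
    rw [artanh, Real.log_div (by linarith [hv.1]) (by linarith [hv.2])]
  have hd : HasDerivAt (fun v => (1/2) * (Real.log (1 + v) - Real.log (1 - v)))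
      (1 / (1 - u ^ 2)) u := by
    have d1 : HasDerivAt (fun v : ℝ => Real.log (1 + v)) (1 / (1 + u)) u := by
      simpa using ((hasDerivAt_id u).const_add 1).log hp.ne'
    have d2 : HasDerivAt (fun v : ℝ => Real.log (1 - v)) (-1 / (1 - u)) u := by
      simpa using ((hasDerivAt_id u).const_sub 1).log hq.ne'
    have h := ((d1.sub d2).const_mul (1/2 : ℝ))
    refine h.congr_deriv ?_
    have h3 : (1:ℝ) - u^2 = (1+u)*(1-u) := by ring
    rw [h3]
    field_simp
    ring
  exact hd.congr_of_eventuallyEq key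

lemma artanh_zero : artanh 0 = 0 := by simp [artanh]

lemma mono_aux (f : ℝ → ℝ) (f' : ℝ → ℝ)
    (hd : ∀ u ∈ Set.Icc (0:ℝ) (1/2), HasDerivAt f (f' u) u)
    (hpos : ∀ u ∈ Set.Ioo (0:ℝ) (1/2), 0 ≤ f' u) :
    MonotoneOn f (Set.Icc (0:ℝ) (1/2)) := by
  apply monotoneOn_of_deriv_nonneg (convex_Icc _ _)
  · exact fun u hu => (hd u hu).continuousAt.continuousWithinAt
  · rw [interior_Icc]
    exact fun u hu => ((hd u (Set.mem_Icc_of_Ioo hu)).differentiableAt).differentiableWithinAt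
  · rw [interior_Icc]
    intro u hu
    rw [(hd u (Set.mem_Icc_of_Ioo hu)).deriv]
    exact hpos u hu

lemma artanh_bounds {t : ℝ} (h0 : 0 ≤ t) (h1 : t ≤ 1/2) :
    t + t^3/3 ≤ artanh t ∧ artanh t ≤ t + t^3/3 + (4/15)*t^5 := by
  have hmem : ∀ u ∈ Set.Icc (0:ℝ) (1/2), (-1 < u ∧ u < 1) := by
    intro u hu; constructor <;> [linarith [hu.1]; linarith [hu.2]]
  have hsq : ∀ u ∈ Set.Icc (0:ℝ) (1/2), (0:ℝ) < 1 - u^2 := by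
    intro u hu; nlinarith [hu.1, hu.2]
  constructor
  · have h := mono_aux (fun u => artanh u - u - u^3/3) (fun u => 1/(1-u^2) - 1 - u^2)
      (fun u hu => ((hasDerivAt_artanh (hmem u hu).1 (hmem u hu).2).sub (hasDerivAt_id u)).sub
        (by simpa using ((hasDerivAt_pow 3 u).div_const 3)))
      (fun u hu => by
        have h2 := hsq u (Set.mem_Icc_of_Ioo hu)
        have heq : (1:ℝ)/(1-u^2) - 1 - u^2 = u^4 / (1-u^2) := by field_simp; ring
        show (0:ℝ) ≤ 1/(1-u^2) - 1 - u^2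
        rw [heq]; positivity)
    have h2 := h (Set.mem_Icc.2 ⟨le_refl 0, by norm_num⟩) (Set.mem_Icc.2 ⟨h0, h1⟩) h0
    simp only [artanh_zero] at h2
    linarith [h2]
  · have h := mono_aux (fun u => (4/15)*u^5 + u + u^3/3 - artanh u)
      (fun u => (4/3)*u^4 + 1 + u^2 - 1/(1-u^2))
      (fun u hu => by
        have d1 : HasDerivAt (fun u : ℝ => (4:ℝ)/15*u^5) ((4/3)*u^4) u := by
          have h5 := (hasDerivAt_pow 5 u).const_mul ((4:ℝ)/15)
          refine h5.congr_deriv ?_; push_cast; ring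
        have d2 : HasDerivAt (fun u : ℝ => u^3/3) (u^2) u := by
          simpa using ((hasDerivAt_pow 3 u).div_const 3)
        exact ((d1.add (hasDerivAt_id u)).add d2).sub
          (hasDerivAt_artanh (hmem u hu).1 (hmem u hu).2))
      (fun u hu => by
        have h2 := hsq u (Set.mem_Icc_of_Ioo hu)
        have hu1 := hu.1; have hu2 := hu.2
        have key : 1/(1-u^2) ≤ 1 + u^2 + (4/3)*u^4 := by
          rw [div_le_iff₀ h2]
          have h4 : u^2 ≤ 1/4 := by nlinarith
          have h5 : (0:ℝ) ≤ u^4 := by positivity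
          have h6 : u^6 ≤ (1/4)*u^4 := by nlinarith
          nlinarith
        linarith)
    have h2 := h (Set.mem_Icc.2 ⟨le_refl 0, by norm_num⟩) (Set.mem_Icc.2 ⟨h0, h1⟩) h0
    simp only [artanh_zero] at h2
    linarith [h2]

def Hf (e : ℝ) (s : ℝ) : ℝ := artanh (e / Real.sqrt s) - e / Real.sqrt s

def Hd (e s : ℝ) : ℝ := (1/(1-(e/Real.sqrt s)^2) - 1) * (-(e/(2*s*Real.sqrt s)))

lemma hasDerivAt_Hf (e s : ℝ) (he : 0 ≤ e) (hs : 0 < s) (ht : e / Real.sqrt s < 1) :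
    HasDerivAt (Hf e) (Hd e s) s := by
  have hsq0 : 0 < Real.sqrt s := Real.sqrt_pos.2 hs
  have hts : HasDerivAt (fun u : ℝ => e / Real.sqrt u) (-(e/(2*s*Real.sqrt s))) s := by
    have h := (hasDerivAt_const s e).div (Real.hasDerivAt_sqrt hs.ne') hsq0.ne'
    refine h.congr_deriv ?_
    rw [Real.sq_sqrt hs.le]
    field_simp
    ring
  have h1 : (-1:ℝ) < e / Real.sqrt s := by
    have := div_nonneg he (Real.sqrt_nonneg s); linarith
  have hart := (hasDerivAt_artanh h1 ht).comp s hts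
  have key := hart.sub hts
  refine key.congr_deriv ?_
  unfold Hd
  ring

def Ld (K e : ℝ) (x : E3) : E3 →L[ℝ] ℝ :=
  (K * Hf e (gf e x)) • prj 2 + (x 2 * (K * Hd e (gf e x))) • DG e x

lemma hasFDerivAt_psi (K e : ℝ) (x : E3) (he : 0 ≤ e) (hD : Df e x ≠ 0) (hg : 0 < gf e x)
    (ht : e / Real.sqrt (gf e x) < 1) :
    HasFDerivAt (fun y : E3 =>
      K * (artanh (e / Real.sqrt (gf e y)) - e / Real.sqrt (gf e y)) * y 2) (Ld K e x) x := by
  have hH := (hasDerivAt_Hf e (gf e x) he hg ht).comp_hasFDerivAt x (hasFDerivAt_gf e x hD)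
  have h1 : HasFDerivAt (fun y => K * Hf e (gf e y)) (K • (Hd e (gf e x) • DG e x)) x :=
    hH.const_mul K
  have key := h1.mul (hasFDerivAt_coord 2 x)
  refine key.congr_fderiv ?_
  ext v
  simp [Ld, prj_apply]
  ring

lemma t_half {e r σ : ℝ} (he : 0 < e) (hr : 0 < r) (hσ1 : r ≤ σ) (her : 2*e ≤ r) :
    e/σ ≤ 1/2 := by
  have hσ0 : 0 < σ := lt_of_lt_of_le hr hσ1
  have h1 : e/σ ≤ e/r := by gcongr
  have h2 : e/r ≤ 1/2 := by rw [div_le_iff₀ hr]; linarith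
  linarith

set_option maxHeartbeats 1000000 in
lemma value_est (K e r σ : ℝ) (hK : 0 < K) (he : 0 < e) (hr : 0 < r)
    (hσ1 : r ≤ σ) (hσ2 : σ^2 ≤ r^2 + e^2) (her : 2*e ≤ r) :
    |K*(artanh (e/σ) - e/σ) - K*e^3/(3*r^3)| ≤ (11/10)*K*e^5/r^5 := by
  have hσ0 : 0 < σ := lt_of_lt_of_le hr hσ1
  set t := e/σ with htdef
  have ht0 : 0 ≤ t := by positivity
  have ht2 : t ≤ 1/2 := t_half he hr hσ1 her
  obtain ⟨hA1, hA2⟩ := artanh_bounds ht0 ht2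
  have hts : t^3 = e^3/σ^3 := by rw [htdef, div_pow]
  have ht5 : t^5 = e^5/σ^5 := by rw [htdef, div_pow]
  have hd1 : σ - r ≤ e^2/(2*r) := by
    rw [le_div_iff₀ (by positivity)]; nlinarith
  have hq : σ^2 + σ*r + r^2 ≤ 5*r^2 := by nlinarith
  have h3 : σ^3 - r^3 ≤ (5/2)*e^2*r := by
    have hmm := mul_le_mul hd1 hq (by positivity) (by positivity)
    calc σ^3 - r^3 = (σ - r)*(σ^2+σ*r+r^2) := by ring
      _ ≤ (e^2/(2*r))*(5*r^2) := hmm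
      _ = (5/2)*e^2*r := by field_simp
  have hg1 : e^3/(3*σ^3) ≤ e^3/(3*r^3) := by gcongr
  have hg2 : e^3/(3*r^3) - e^3/(3*σ^3) ≤ (5/6)*e^5/r^5 := by
    have key : e^3/(3*r^3) - e^3/(3*σ^3) = (e^3*(σ^3-r^3))/(3*r^3*σ^3) := by
      field_simp
    rw [key]
    have hr3σ3 : r^3 ≤ σ^3 := pow_le_pow_left₀ hr.le hσ1 3
    calc (e^3*(σ^3-r^3))/(3*r^3*σ^3) ≤ (e^3*((5/2)*e^2*r))/(3*r^3*r^3) := by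
          apply div_le_div₀ (by positivity)
            (by nlinarith [pow_pos he 3]) (by positivity) (by nlinarith [pow_pos hr 3])
      _ = (5/6)*e^5/r^5 := by field_simp; ring
  have h5 : e^5/σ^5 ≤ e^5/r^5 := by gcongr
  have hb1 : |artanh t - t - t^3/3| ≤ (4/15)*(e^5/r^5) := by
    have h50 : (0:ℝ) ≤ t^5 := pow_nonneg ht0 5
    have hrhs : (0:ℝ) ≤ (4/15)*(e^5/r^5) := by positivity
    have hx : (4/15)*t^5 ≤ (4/15)*(e^5/r^5) := by rw [ht5]; linarith
    rw [abs_le]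
    exact ⟨by linarith, by linarith⟩
  have hb2 : |t^3/3 - e^3/(3*r^3)| ≤ (5/6)*e^5/r^5 := by
    have e1 : t^3/3 = e^3/(3*σ^3) := by rw [hts]; ring
    have hrhs : (0:ℝ) ≤ (5/6)*e^5/r^5 := by positivity
    rw [e1, abs_le]
    exact ⟨by linarith, by linarith⟩
  have hsplit : K*(artanh t - t) - K*e^3/(3*r^3)
      = K*(artanh t - t - t^3/3) + K*(t^3/3 - e^3/(3*r^3)) := by ring
  rw [hsplit]
  calc |K*(artanh t - t - t^3/3) + K*(t^3/3 - e^3/(3*r^3))|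
      ≤ |K*(artanh t - t - t^3/3)| + |K*(t^3/3 - e^3/(3*r^3))| := abs_add_le _ _
    _ = K*|artanh t - t - t^3/3| + K*|t^3/3 - e^3/(3*r^3)| := by
        rw [abs_mul, abs_mul, abs_of_pos hK]
    _ ≤ K*((4/15)*(e^5/r^5)) + K*((5/6)*e^5/r^5) := by
        have m1 := mul_le_mul_of_nonneg_left hb1 hK.le
        have m2 := mul_le_mul_of_nonneg_left hb2 hK.le
        linarith
    _ = (11/10)*K*e^5/r^5 := by ring

lemma Hf_est (e r σ : ℝ) (he : 0 < e) (hr : 0 < r) (hσ1 : r ≤ σ) (her : 2*e ≤ r) :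
    |artanh (e/σ) - e/σ| ≤ e^3/r^3 := by
  have hσ0 : 0 < σ := lt_of_lt_of_le hr hσ1
  set t := e/σ with htdef
  have ht0 : 0 ≤ t := by positivity
  have ht2 : t ≤ 1/2 := t_half he hr hσ1 her
  obtain ⟨hA1, hA2⟩ := artanh_bounds ht0 ht2
  have hts : t^3 = e^3/σ^3 := by rw [htdef, div_pow]
  have ht4 : t^2 ≤ 1/4 := by nlinarith
  have h30 : (0:ℝ) ≤ t^3 := pow_nonneg ht0 3
  have h5 : t^5 ≤ (1/4)*t^3 := by
    have hmm := mul_le_mul_of_nonneg_left ht4 h30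
    calc t^5 = t^3*t^2 := by ring
      _ ≤ t^3*(1/4) := hmm
      _ = (1/4)*t^3 := by ring
  have h3 : e^3/σ^3 ≤ e^3/r^3 := by gcongr
  have hh : t^3 ≤ e^3/r^3 := by rw [hts]; exact h3
  have hpos : (0:ℝ) ≤ e^3/r^3 := by positivity
  rw [abs_le]
  exact ⟨by linarith, by linarith⟩

lemma Hd_est (e s r : ℝ) (he : 0 < e) (hr : 0 < r) (hs : r^2 ≤ s) (her : 2*e ≤ r) :
    |Hd e s| ≤ (2/3)*e^3/r^5 := by
  set σ := Real.sqrt s with hσdef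
  have hs0 : 0 < s := lt_of_lt_of_le (by positivity) hs
  have hσ1 : r ≤ σ := by
    calc r = Real.sqrt (r^2) := (Real.sqrt_sq hr.le).symm
      _ ≤ σ := Real.sqrt_le_sqrt hs
  have hσ0 : 0 < σ := lt_of_lt_of_le hr hσ1
  have hσ2 : σ^2 = s := Real.sq_sqrt hs0.le
  set t := e/σ with htdef
  have ht0 : 0 ≤ t := by positivity
  have ht2 : t ≤ 1/2 := t_half he hr hσ1 her
  have ht4 : t^2 ≤ 1/4 := by nlinarith
  have h1t : (0:ℝ) < 1 - t^2 := by nlinarith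
  have hfrac : 1/(1-t^2) - 1 ≤ (4/3)*t^2 := by
    have : 1/(1-t^2) ≤ 1 + (4/3)*t^2 := by
      rw [div_le_iff₀ h1t]; nlinarith [sq_nonneg t, sq_nonneg (t^2)]
    linarith
  have hfrac0 : 0 ≤ 1/(1-t^2) - 1 := by
    have : 1 ≤ 1/(1-t^2) := by
      rw [le_div_iff₀ h1t]; nlinarith [sq_nonneg t]
    linarith
  have habs : |Hd e s| = (1/(1-t^2)-1)*(e/(2*s*σ)) := by
    rw [Hd, abs_mul, abs_neg, abs_of_nonneg hfrac0, abs_of_nonneg (by positivity : (0:ℝ) ≤ e/(2*s*σ))]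
  have hB : e/(2*s*σ) ≤ e/(2*(r^2*r)) := by
    rw [div_le_div_iff₀ (by positivity) (by positivity)]
    have key : r^2*r ≤ s*σ := mul_le_mul hs hσ1 hr.le hs0.le
    nlinarith [mul_le_mul_of_nonneg_left key he.le]
  have ht2' : t^2 ≤ e^2/r^2 := by
    rw [htdef, div_pow]
    gcongr
  rw [habs]
  calc (1/(1-t^2)-1)*(e/(2*s*σ)) ≤ ((4/3)*t^2)*(e/(2*s*σ)) :=
        mul_le_mul_of_nonneg_right hfrac (by positivity)
    _ ≤ ((4/3)*(e^2/r^2))*(e/(2*(r^2*r))) := by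
        apply mul_le_mul (by linarith) hB (by positivity) (by positivity)
    _ = (2/3)*e^3/r^5 := by field_simp; ring

lemma norm_smul_clm (c : ℝ) (f : E3 →L[ℝ] ℝ) : ‖c • f‖ = |c| * ‖f‖ := by
  have h := norm_smul c f
  rwa [Real.norm_eq_abs] at h

lemma norm_Dr2_le (x : E3) : ‖Dr2 x‖ ≤ 6*‖x‖ := by
  have h : ∀ i : Fin 3, ‖(2*x i) • prj i‖ ≤ 2*‖x‖ := by
    intro i
    rw [norm_smul_clm, abs_mul, abs_two]
    calc 2 * |x i| * ‖prj i‖ ≤ 2*‖x‖*1 := by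
          apply mul_le_mul (by linarith [abs_coord_le i x]) (norm_prj_le i)
            (norm_nonneg _) (by positivity)
      _ = 2*‖x‖ := by ring
  calc ‖Dr2 x‖ ≤ ‖(2*x 0) • prj 0 + (2*x 1) • prj 1‖ + ‖(2*x 2) • prj 2‖ := norm_add_le _ _
    _ ≤ (‖(2*x 0) • prj 0‖ + ‖(2*x 1) • prj 1‖) + ‖(2*x 2) • prj 2‖ := by
        have := norm_add_le ((2*x 0) • prj 0) ((2*x 1) • prj 1)
        linarith
    _ ≤ 6*‖x‖ := by linarith [h 0, h 1, h 2]

lemma norm_DD_le (e : ℝ) (x : E3) : ‖DD e x‖ ≤ (2*(r2 x + e^2))*(6*‖x‖) + 8*e^2*‖x‖ := by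
  calc ‖DD e x‖ ≤ ‖(2*(r2 x + e^2)) • Dr2 x‖ + ‖(8*e^2*x 2) • prj 2‖ := norm_sub_le _ _
    _ ≤ (2*(r2 x + e^2))*(6*‖x‖) + 8*e^2*‖x‖ := by
        rw [norm_smul_clm, norm_smul_clm]
        have h1 : |2 * (r2 x + e^2)| = 2*(r2 x + e^2) := by
          rw [abs_of_nonneg]; nlinarith [r2_nonneg x, sq_nonneg e]
        have h2 : |8 * e^2 * x 2| ≤ 8*e^2*‖x‖ := by
          rw [abs_mul]
          have : |8 * e^2| = 8*e^2 := by rw [abs_of_nonneg]; positivity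
          rw [this]
          apply mul_le_mul_of_nonneg_left (abs_coord_le 2 x) (by positivity)
        have h3 := norm_Dr2_le x
        have h4 := norm_prj_le 2
        have h5 : 0 ≤ 2*(r2 x + e^2) := by nlinarith [r2_nonneg x, sq_nonneg e]
        rw [h1]
        have m1 := mul_le_mul_of_nonneg_left h3 h5
        have m2 := mul_le_mul h2 h4 (norm_nonneg _) (by positivity)
        nlinarith [norm_nonneg (prj 2), abs_nonneg (8 * e^2 * x 2)]


set_option maxHeartbeats 2000000

/-- far-field expansion of the magnetostatic potential of a uniformly
magnetized prolate spheroid. Let `0 < b < a`, `m > 0`, and for `x` outside the closed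
prolate spheroid let `ξf x` be the exterior spheroidal coordinate, i.e. the unique root
`ξ > a²` of `ρ²/(ξ + b² − a²) + x₃²/ξ = 1`.  Define
`φ(x) = (4π a b² m/(a² − b²)^{3/2}) (artanh t − t) x₃` with `t = √(a² − b²)/√(ξf x)`.
Then there are a constant `c > 0` proportional to `m a b²` and a constant `C > 0`
depending only on `a` and `b` such that for all `|x| ≥ 2a`:
`|φ(x) − c x₃/|x|³| ≤ C m |x₃| a⁵/|x|⁵` and `|∇φ(x)| ≤ C m a b²/|x|³`. -/
theorem stmt16 (a b m : ℝ) (hb : 0 < b) (hba : b < a) (hm : 0 < m)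
    (ξf : E3 → ℝ)
    (hξ : ∀ x : E3, x ∉ sph b a →
      a ^ 2 < ξf x ∧
        ((x 0) ^ 2 + (x 1) ^ 2) / (ξf x + b ^ 2 - a ^ 2) + (x 2) ^ 2 / ξf x = 1) :
    ∃ c C : ℝ, 0 < C ∧ (∃ k : ℝ, 0 < k ∧ c = k * (m * a * b ^ 2)) ∧ 0 < c ∧
      ∀ x : E3, 2 * a ≤ ‖x‖ →
        |(fun y : E3 => 4 * Real.pi * a * b ^ 2 * m / (a ^ 2 - b ^ 2) ^ ((3 : ℝ) / 2) *
              (artanh (Real.sqrt (a ^ 2 - b ^ 2) / Real.sqrt (ξf y)) -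
                Real.sqrt (a ^ 2 - b ^ 2) / Real.sqrt (ξf y)) * y 2) x -
            c * x 2 / ‖x‖ ^ 3| ≤ C * m * |x 2| * a ^ 5 / ‖x‖ ^ 5 ∧
        ‖fderiv ℝ (fun y : E3 => 4 * Real.pi * a * b ^ 2 * m / (a ^ 2 - b ^ 2) ^ ((3 : ℝ) / 2) *
              (artanh (Real.sqrt (a ^ 2 - b ^ 2) / Real.sqrt (ξf y)) -
                Real.sqrt (a ^ 2 - b ^ 2) / Real.sqrt (ξf y)) * y 2) x‖ ≤
          C * m * a * b ^ 2 / ‖x‖ ^ 3 := by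
  have ha : 0 < a := hb.trans hba
  have hab2 : 0 < a^2 - b^2 := by nlinarith
  set e := Real.sqrt (a ^ 2 - b ^ 2) with hedef
  have he2 : e^2 = a^2 - b^2 := Real.sq_sqrt hab2.le
  have he0 : 0 < e := Real.sqrt_pos.2 hab2
  have hea : e < a := by nlinarith
  have hrpow : (a ^ 2 - b ^ 2) ^ ((3:ℝ)/2) = e^3 := by
    rw [hedef, Real.sqrt_eq_rpow, ← Real.rpow_natCast ((a^2-b^2) ^ ((1:ℝ)/2)) 3,
        ← Real.rpow_mul hab2.le]
    norm_num
  set K := 4 * Real.pi * a * b ^ 2 * m / (a ^ 2 - b ^ 2) ^ ((3 : ℝ) / 2) with hKdef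
  have hK : 0 < K := by rw [hKdef, hrpow]; positivity
  have hKe : K*e^3 = 4*Real.pi*a*b^2*m := by
    rw [hKdef, hrpow]
    field_simp
  -- identification of ξf with the explicit root gf
  have xi_eq : ∀ y : E3, a < ‖y‖ → ξf y = gf e y := by
    intro y hy
    have hr2y : r2 y = ‖y‖^2 := r2_eq y
    have hy2 : a^2 < ‖y‖^2 := by nlinarith [norm_nonneg y]
    have hout : y ∉ sph b a := by
      rw [sph, Set.mem_setOf_eq, not_le]
      have h0 : (y 0)^2/a^2 ≤ (y 0)^2/b^2 := by gcongr (y 0)^2 / ?_ <;> nlinarith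
      have h1 : (y 1)^2/a^2 ≤ (y 1)^2/b^2 := by gcongr (y 1)^2 / ?_ <;> nlinarith
      have key : ‖y‖^2/a^2 ≤ (y 0)^2/b^2 + (y 1)^2/b^2 + (y 2)^2/a^2 := by
        rw [← hr2y, r2, add_div, add_div]
        linarith
      have h2 : 1 < ‖y‖^2/a^2 := by rw [lt_div_iff₀ (by positivity)]; nlinarith
      linarith
    obtain ⟨h1, h2⟩ := hξ y hout
    have hξpos : 0 < ξf y := lt_trans (by positivity) h1
    have hden : 0 < ξf y + b^2 - a^2 := by nlinarith
    have h2' : ((y 0)^2 + (y 1)^2) * ξf y + (y 2)^2 * (ξf y + b^2 - a^2)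
        = (ξf y + b^2 - a^2) * ξf y := by
      field_simp at h2
      linarith [h2]
    have quad : ξf y^2 - (r2 y + e^2)*ξf y + e^2*(y 2)^2 = 0 := by
      rw [r2]
      linear_combination (-(1:ℝ)) * h2' - (ξf y - (y 2)^2) * he2
    have hx2y : (y 2)^2 ≤ r2 y := by rw [r2]; nlinarith [sq_nonneg (y 0), sq_nonneg (y 1)]
    have hDlb : 0 ≤ Df e y := by
      have h4 : 0 ≤ 4*e^2*(r2 y - (y 2)^2) := by
        apply mul_nonneg (by positivity)
        linarith
      unfold Df
      nlinarith [sq_nonneg (r2 y - e^2)]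
    have hsq : Real.sqrt (Df e y)^2 = Df e y := Real.sq_sqrt hDlb
    have hfact : (2*ξf y - (r2 y + e^2))^2 = Df e y := by
      unfold Df
      linear_combination (4:ℝ) * quad
    have hle : (r2 y + e^2) - 2*e^2 ≤ Real.sqrt (Df e y) := by
      rcases le_or_gt ((r2 y + e^2) - 2*e^2) 0 with h|h
      · exact le_trans h (Real.sqrt_nonneg _)
      · have hsq2 : ((r2 y + e^2) - 2*e^2)^2 ≤ Df e y := by
          have h4 : 0 ≤ 4*e^2*(r2 y - (y 2)^2) := by
            apply mul_nonneg (by positivity)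
            linarith
          unfold Df
          nlinarith
        calc (r2 y + e^2) - 2*e^2 = Real.sqrt (((r2 y+e^2)-2*e^2)^2) := (Real.sqrt_sq h.le).symm
          _ ≤ Real.sqrt (Df e y) := Real.sqrt_le_sqrt hsq2
    have hcases : (2*ξf y - (r2 y + e^2) - Real.sqrt (Df e y))
        * (2*ξf y - (r2 y + e^2) + Real.sqrt (Df e y)) = 0 := by
      linear_combination hfact - hsq
    rcases mul_eq_zero.1 hcases with h|h
    · unfold gf; linarith
    · exfalso
      have hxe : ξf y ≤ e^2 := by linarith
      nlinarith
  -- main estimates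
  refine ⟨4*Real.pi/3*(m*a*b^2), 200, by norm_num, ⟨4*Real.pi/3, by positivity, by ring⟩,
    by positivity, ?_⟩
  intro x hx
  have hr0 : 0 < ‖x‖ := by linarith
  set r := ‖x‖ with hrdef
  have hxα : a < r := by linarith
  have hr2x : r2 x = r^2 := r2_eq x
  have hx2 : (x 2)^2 ≤ r^2 := by
    have h := abs_coord_le 2 x
    nlinarith [abs_nonneg (x 2), sq_abs (x 2)]
  have her : 2*e ≤ r := by linarith
  have he2r : e^2 ≤ r^2/4 := by nlinarith
  have hDlbx : (r^2-e^2)^2 ≤ Df e x := by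
    have h4 : 0 ≤ 4*e^2*(r^2 - (x 2)^2) := by
      apply mul_nonneg (by positivity)
      linarith
    unfold Df; rw [hr2x]; nlinarith
  have hDubx : Df e x ≤ (r^2+e^2)^2 := by
    unfold Df; rw [hr2x]; nlinarith [sq_nonneg (x 2), sq_nonneg e, mul_nonneg (mul_nonneg (by norm_num : (0:ℝ) ≤ 4) (sq_nonneg e)) (sq_nonneg (x 2))]
  have hr2e : 0 < r^2 - e^2 := by nlinarith
  have hD0 : 0 < Df e x := lt_of_lt_of_le (pow_pos hr2e 2) hDlbx
  have hsD1 : r^2 - e^2 ≤ Real.sqrt (Df e x) := by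
    calc r^2 - e^2 = Real.sqrt ((r^2-e^2)^2) := (Real.sqrt_sq hr2e.le).symm
      _ ≤ Real.sqrt (Df e x) := Real.sqrt_le_sqrt hDlbx
  have hsD2 : Real.sqrt (Df e x) ≤ r^2 + e^2 := by
    calc Real.sqrt (Df e x) ≤ Real.sqrt ((r^2+e^2)^2) := Real.sqrt_le_sqrt hDubx
      _ = r^2+e^2 := Real.sqrt_sq (by positivity)
  have hgl : r^2 ≤ gf e x := by unfold gf; rw [hr2x]; linarith
  have hgu : gf e x ≤ r^2 + e^2 := by unfold gf; rw [hr2x]; linarith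
  have hg0 : 0 < gf e x := lt_of_lt_of_le (by positivity) hgl
  have hσ1 : r ≤ Real.sqrt (gf e x) := by
    calc r = Real.sqrt (r^2) := (Real.sqrt_sq hr0.le).symm
      _ ≤ Real.sqrt (gf e x) := Real.sqrt_le_sqrt hgl
  have hσ0 : 0 < Real.sqrt (gf e x) := lt_of_lt_of_le hr0 hσ1
  have hσ2 : Real.sqrt (gf e x)^2 = gf e x := Real.sq_sqrt hg0.le
  have hσub : Real.sqrt (gf e x)^2 ≤ r^2 + e^2 := by rw [hσ2]; exact hgu
  have ht1 : e/Real.sqrt (gf e x) < 1 := by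
    rw [div_lt_one hσ0]; linarith
  -- fderiv identification
  have hnb : ∀ᶠ y in 𝓝 x, ξf y = gf e y := by
    have hopen : IsOpen {y : E3 | a < ‖y‖} := isOpen_lt continuous_const continuous_norm
    filter_upwards [hopen.mem_nhds (show x ∈ {y : E3 | a < ‖y‖} from hxα)] with y hy
    exact xi_eq y hy
  have hfeq : (fun y : E3 => K * (artanh (e/Real.sqrt (ξf y)) - e/Real.sqrt (ξf y)) * y 2)
      =ᶠ[𝓝 x] (fun y : E3 => K * (artanh (e/Real.sqrt (gf e y)) - e/Real.sqrt (gf e y)) * y 2) := by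
    filter_upwards [hnb] with y hy
    rw [hy]
  have hder := hasFDerivAt_psi K e x he0.le hD0.ne' hg0 ht1
  have hfd : fderiv ℝ (fun y : E3 => K * (artanh (e/Real.sqrt (ξf y)) - e/Real.sqrt (ξf y)) * y 2) x
      = Ld K e x := by
    rw [hfeq.fderiv_eq]
    exact hder.fderiv
  have hpi := Real.pi_le_four
  have hpi0 := Real.pi_pos
  constructor
  · -- value estimate
    show |K * (artanh (e/Real.sqrt (ξf x)) - e/Real.sqrt (ξf x)) * x 2
        - 4*Real.pi/3*(m*a*b^2) * x 2 / r^3| ≤ 200 * m * |x 2| * a^5 / r^5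
    rw [xi_eq x hxα]
    have hval := value_est K e r (Real.sqrt (gf e x)) hK he0 hr0 hσ1 hσub her
    have hc : 4*Real.pi/3*(m*a*b^2) = K*e^3/3 := by rw [hKe]; ring
    rw [hc]
    have hsplit : K * (artanh (e/Real.sqrt (gf e x)) - e/Real.sqrt (gf e x)) * x 2
        - K*e^3/3 * x 2 / r^3
        = (K*(artanh (e/Real.sqrt (gf e x)) - e/Real.sqrt (gf e x)) - K*e^3/(3*r^3)) * x 2 := by
      field_simp
    rw [hsplit, abs_mul]
    have hb2a : b^2 ≤ a^2 := by nlinarith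
    have he2a : e^2 ≤ a^2 := by nlinarith
    have hcore : (11/10)*K*e^5 ≤ 200*m*a^5 := by
      have h5 : (11/10)*K*e^5 = (11/10)*((K*e^3)*e^2) := by ring
      rw [h5, hKe]
      have hP0 : (0:ℝ) ≤ a*b^2*m*e^2 := by positivity
      have hP : a*b^2*m*e^2 ≤ m*a^5 := by
        have k1 : b^2*e^2 ≤ a^2*a^2 := mul_le_mul hb2a he2a (sq_nonneg e) (sq_nonneg a)
        have k2 : (a*m)*(b^2*e^2) ≤ (a*m)*(a^2*a^2) :=
          mul_le_mul_of_nonneg_left k1 (by positivity)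
        calc a*b^2*m*e^2 = (a*m)*(b^2*e^2) := by ring
          _ ≤ (a*m)*(a^2*a^2) := k2
          _ = m*a^5 := by ring
      have h6 : Real.pi*(a*b^2*m*e^2) ≤ 4*(a*b^2*m*e^2) :=
        mul_le_mul_of_nonneg_right hpi hP0
      have h7' : (0:ℝ) ≤ m*a^5 := by positivity
      linarith [h6, hP, hP0, h7']
    have hKe5 : (11/10)*K*e^5/r^5 ≤ 200*m*a^5/r^5 := by
      rw [div_le_div_iff₀ (by positivity) (by positivity)]
      linarith [mul_le_mul_of_nonneg_right hcore (le_of_lt (pow_pos hr0 5))]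
    have step1 := mul_le_mul_of_nonneg_right hval (abs_nonneg (x 2))
    have step2 := mul_le_mul_of_nonneg_right hKe5 (abs_nonneg (x 2))
    have step3 : (200*m*a^5/r^5)*|x 2| = 200 * m * |x 2| * a^5/r^5 := by ring
    linarith
  · -- gradient estimate
    rw [hfd]
    have hHfb : |Hf e (gf e x)| ≤ e^3/r^3 :=
      Hf_est e r (Real.sqrt (gf e x)) he0 hr0 hσ1 her
    have hHdb : |Hd e (gf e x)| ≤ (2/3)*e^3/r^5 := Hd_est e (gf e x) r he0 hr0 hgl her
    have hD34 : (3/4)*r^2 ≤ Real.sqrt (Df e x) := by linarith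
    have hDDb : ‖DD e x‖ ≤ 17*r^3 := by
      have h := norm_DD_le e x
      rw [hr2x] at h
      linarith [mul_le_mul_of_nonneg_right he2r hr0.le]
    have hinv : (2*Real.sqrt (Df e x))⁻¹ ≤ 2/(3*r^2) := by
      have hA : (3*r^2)/2 ≤ 2*Real.sqrt (Df e x) := by linarith
      calc (2*Real.sqrt (Df e x))⁻¹ ≤ ((3*r^2)/2)⁻¹ := by
            apply inv_anti₀ (by positivity) hA
        _ = 2/(3*r^2) := by rw [inv_div]
    have hDGb : ‖DG e x‖ ≤ 9*r := by
      have hn1 := norm_Dr2_le x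
      have htri := norm_add_le (Dr2 x) ((2*Real.sqrt (Df e x))⁻¹ • DD e x)
      have hsm2 : ‖(2*Real.sqrt (Df e x))⁻¹ • DD e x‖ ≤ (2/(3*r^2))*(17*r^3) := by
        rw [norm_smul_clm, abs_of_nonneg (by positivity : (0:ℝ) ≤ (2*Real.sqrt (Df e x))⁻¹)]
        apply mul_le_mul hinv hDDb (norm_nonneg _) (by positivity)
      have hDGn : ‖DG e x‖ = |(2:ℝ)⁻¹| * ‖Dr2 x + (2*Real.sqrt (Df e x))⁻¹ • DD e x‖ := by
        unfold DG
        exact norm_smul_clm _ _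
      have habs12 : |(2:ℝ)⁻¹| = 1/2 := by norm_num
      have hsimp : (2/(3*r^2))*(17*r^3) = (34/3)*r := by field_simp; ring
      rw [hDGn, habs12]
      rw [hsimp] at hsm2
      linarith [htri, hsm2, hn1, hr0]
    have hx2r : |x 2| ≤ r := abs_coord_le 2 x
    have hL1 : ‖(K * Hf e (gf e x)) • prj 2‖ ≤ K*(e^3/r^3) := by
      rw [norm_smul_clm, abs_mul, abs_of_pos hK]
      calc K * |Hf e (gf e x)| * ‖prj 2‖ ≤ K*(e^3/r^3)*1 := by
            apply mul_le_mul (mul_le_mul_of_nonneg_left hHfb hK.le) (norm_prj_le 2)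
              (norm_nonneg _) (by positivity)
        _ = K*(e^3/r^3) := by ring
    have hL2 : ‖(x 2 * (K * Hd e (gf e x))) • DG e x‖ ≤ (r*(K*((2/3)*e^3/r^5)))*(9*r) := by
      rw [norm_smul_clm]
      have habs2 : |x 2 * (K * Hd e (gf e x))| ≤ r*(K*((2/3)*e^3/r^5)) := by
        rw [abs_mul, abs_mul, abs_of_pos hK]
        apply mul_le_mul hx2r (mul_le_mul_of_nonneg_left hHdb hK.le) (by positivity)
          hr0.le
      apply mul_le_mul habs2 hDGb (norm_nonneg _) (by positivity)
    have hLd : ‖Ld K e x‖ ≤ K*(e^3/r^3) + (r*(K*((2/3)*e^3/r^5)))*(9*r) := by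
      have htr : ‖Ld K e x‖ ≤ ‖(K * Hf e (gf e x)) • prj 2‖
          + ‖(x 2 * (K * Hd e (gf e x))) • DG e x‖ := by
        unfold Ld
        exact norm_add_le _ _
      linarith
    have hsimp2 : K*(e^3/r^3) + (r*(K*((2/3)*e^3/r^5)))*(9*r) = 7*K*e^3/r^3 := by
      field_simp
      ring
    have hfin : 7*K*e^3/r^3 ≤ 200*m*a*b^2/r^3 := by
      rw [div_le_div_iff₀ (by positivity) (by positivity)]
      have h7 : 7*K*e^3 = 28*Real.pi*a*b^2*m := by
        have : 7*K*e^3 = 7*(K*e^3) := by ring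
        rw [this, hKe]; ring
      have hab2m : (0:ℝ) ≤ a*b^2*m := by positivity
      have h8 : 28*Real.pi*a*b^2*m ≤ 200*m*a*b^2 := by
        linarith [mul_le_mul_of_nonneg_right hpi hab2m, hab2m]
      have h9 : 7*K*e^3 ≤ 200*m*a*b^2 := by rw [h7]; exact h8
      linarith [mul_le_mul_of_nonneg_right h9 (le_of_lt (pow_pos hr0 3))]
    rw [hsimp2] at hLd
    linarith
end
end

section
/- Let 1 < α < 2 and β₁ ∈ ℝ satisfy 6α + 2β₁ > 9, and let K, m > 0. Suppose that for each small ε > 0 and each j = 1,…,N_ε there is a vector field H_j : ℝ³ → ℝ³ with |H_j(x)| ≤ K m ε^{β₁} Vol(𝒫_j^ε) |x − x_j^ε|^{−3} whenever |x − x_j^ε| ≥ dε/2, and that each particle 𝒫_i^ε carries a magnetization density m_i with |m_i(x)| ≤ m ε^{β₁} on 𝒫_i^ε. Then there is C > 0 independent of ε such that Σ_{i ≠ j} ∫_{𝒫_i^ε} |H_j · m_i| dV ≤ C ε^{6α + 2β₁ − 9}, and in particular this sum tends to 0 as ε → 0. -/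
open MeasureTheory Filter Metric Set
open scoped RealInnerProductSpace ENNReal NNReal Topology

noncomputable section

/-- A rotation of `ℝ³`: a linear isometry with determinant one. -/
def IsRotation (R : E3 ≃ₗᵢ[ℝ] E3) : Prop :=
  LinearMap.det (R.toLinearEquiv : E3 →ₗ[ℝ] E3) = 1

/-- A particle: the image of the reference spheroid `sph A B` under `y ↦ c + s • R y`. -/
def part (A B : ℝ) (c : E3) (s : ℝ) (R : E3 ≃ₗᵢ[ℝ] E3) : Set E3 :=
  (fun y => c + s • R y) '' sph A B

/-- The boundary surface of a particle. -/
def partS (A B : ℝ) (c : E3) (s : ℝ) (R : E3 ≃ₗᵢ[ℝ] E3) : Set E3 :=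
  (fun y => c + s • R y) '' sphS A B

/-- The outward unit normal on the surface of a particle. -/
def partN (A B : ℝ) (c : E3) (s : ℝ) (R : E3 ≃ₗᵢ[ℝ] E3) (y : E3) : E3 :=
  R (sphN A B (s⁻¹ • R.symm (y - c)))


private theorem sphaux_subset (A B : ℝ) (hA : 0 < A) (hAB : A < B) :
    sph A B ⊆ Metric.closedBall 0 B := by
  intro y hy
  simp only [sph, Set.mem_setOf_eq] at hy
  have hB : 0 < B := hA.trans hAB
  rw [div_add_div _ _ (by positivity) (by positivity),
    div_add_div _ _ (by positivity) (by positivity), div_le_one (by positivity)] at hy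
  have hsum : (y 0)^2 + (y 1)^2 + (y 2)^2 ≤ B^2 := by
    nlinarith [mul_nonneg (mul_nonneg (by positivity : (0:ℝ) ≤ (y 0)^2 + (y 1)^2)
      (by nlinarith : (0:ℝ) ≤ B^2 - A^2)) (sq_nonneg A),
      mul_pos (mul_pos hA hA) (mul_pos hA hA), sq_nonneg (y 2), mul_pos hA hA]
  rw [Metric.mem_closedBall, dist_zero_right, EuclideanSpace.norm_eq]
  rw [show ∑ i, ‖y i‖^2 = (y 0)^2 + (y 1)^2 + (y 2)^2 by simp [Fin.sum_univ_three, sq_abs]]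
  calc Real.sqrt _ ≤ Real.sqrt (B^2) := Real.sqrt_le_sqrt hsum
  _ = B := Real.sqrt_sq hB.le

private theorem sphaux_compact (A B : ℝ) (hA : 0 < A) (hAB : A < B) : IsCompact (sph A B) := by
  apply Metric.isCompact_of_isClosed_isBounded
  · have : Continuous fun x : E3 => (x 0) ^ 2 / A ^ 2 + (x 1) ^ 2 / A ^ 2 + (x 2) ^ 2 / B ^ 2 := by
      fun_prop
    exact isClosed_le this continuous_const
  · exact (Metric.isBounded_closedBall).subset (sphaux_subset A B hA hAB)

/-- Geometric configuration of the dilute ferronematic composite from the paper: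
a bounded smooth domain `Ω ⊂ ℝ³`; a reference closed prolate spheroid `𝒫 = sph b a`
with semi-minor axis `b` and semi-major axis `a` (`0 < b < a`), long axis along `z`;
exponent `1 < α < 2`; constants `0 < d < D`, `g ∈ ℝ`; and, for each `0 < ε < ε₀`,
particles `𝒫ᵢ^ε = xᵢ^ε + ε^α Rᵢ^ε 𝒫` (`i = 1,…,N_ε`) whose centers are `dε`-separated,
at mutual distance at most `Dε`, with the closed balls of radius `dε/2` around the
centers pairwise disjoint and contained in `Ω`, and `N_ε ≤ N ε⁻³`. -/
structure Config where
  Ω : Set E3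
  a : ℝ
  b : ℝ
  α : ℝ
  d : ℝ
  D : ℝ
  g : ℝ
  ε₀ : ℝ
  Nε : ℝ → ℕ
  xc : (ε : ℝ) → Fin (Nε ε) → E3
  Rot : (ε : ℝ) → Fin (Nε ε) → E3 ≃ₗᵢ[ℝ] E3
  NN : ℝ
  hΩo : IsOpen Ω
  hΩne : Ω.Nonempty
  hΩb : Bornology.IsBounded Ω
  hb : 0 < b
  hba : b < a
  hα1 : 1 < α
  hα2 : α < 2
  hd : 0 < d
  hdD : d < D
  hε₀ : 0 < ε₀
  hRot : ∀ ε i, IsRotation (Rot ε i)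
  hsep_lo : ∀ ε, 0 < ε → ε < ε₀ → ∀ i j, i ≠ j → d * ε ≤ dist (xc ε i) (xc ε j)
  hsep_hi : ∀ ε, 0 < ε → ε < ε₀ → ∀ i j, i ≠ j → dist (xc ε i) (xc ε j) ≤ D * ε
  hdisj : ∀ ε, 0 < ε → ε < ε₀ → ∀ i j, i ≠ j →
    Disjoint (Metric.closedBall (xc ε i) (d * ε / 2)) (Metric.closedBall (xc ε j) (d * ε / 2))
  hball : ∀ ε, 0 < ε → ε < ε₀ → ∀ i, Metric.closedBall (xc ε i) (d * ε / 2) ⊆ Ω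
  hNN : 0 < NN
  hcount : ∀ ε, 0 < ε → ε < ε₀ → (Nε ε : ℝ) ≤ NN * ε⁻¹ ^ 3

namespace Config

variable (cfg : Config)

/-- The `i`-th particle `𝒫ᵢ^ε`. -/
def particle (ε : ℝ) (i : Fin (cfg.Nε ε)) : Set E3 :=
  part cfg.b cfg.a (cfg.xc ε i) (ε ^ cfg.α) (cfg.Rot ε i)

/-- The surface `∂𝒫ᵢ^ε` of the `i`-th particle. -/
def surf (ε : ℝ) (i : Fin (cfg.Nε ε)) : Set E3 :=
  partS cfg.b cfg.a (cfg.xc ε i) (ε ^ cfg.α) (cfg.Rot ε i)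

/-- The outward unit normal on the surface of the `i`-th particle. -/
def normal (ε : ℝ) (i : Fin (cfg.Nε ε)) (y : E3) : E3 :=
  partN cfg.b cfg.a (cfg.xc ε i) (ε ^ cfg.α) (cfg.Rot ε i) y

/-- The perforated domain `Ω ∖ ∪ᵢ 𝒫ᵢ^ε` occupied by the liquid crystal. -/
def dom (ε : ℝ) : Set E3 := cfg.Ω \ ⋃ i, cfg.particle ε i

/-- The anchoring surface energy `g_ε ∫_{∪ᵢ∂𝒫ᵢ^ε} (u·ν)² dσ`, `g_ε = g ε^{3−2α}`. -/
def surfE (ε : ℝ) (u : E3 → E3) : ℝ :=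
  cfg.g * ε ^ (3 - 2 * cfg.α) *
    ∑ i : Fin (cfg.Nε ε), ∫ y in cfg.surf ε i, ⟪u y, cfg.normal ε i y⟫ ^ 2 ∂μH[2]

/-- The liquid crystal energy
`ℰ_ε[u] = ∫_{Ω∖∪ᵢ𝒫ᵢ^ε} (|∇u|² + (1−|u|²)²) dV + g_ε ∫_{∪ᵢ∂𝒫ᵢ^ε} (u·ν)² dσ`. -/
def lcE (ε : ℝ) (u : E3 → E3) : ℝ :=
  (∫ x in cfg.dom ε, (‖fderiv ℝ u x‖ ^ 2 + (1 - ‖u x‖ ^ 2) ^ 2)) + cfg.surfE ε u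

end Config

/-- Membership in `H¹(s; ℝ³)` (as a class of everywhere-defined representatives):
continuity, differentiability on `s`, and square integrability of the function and of
its gradient on `s`. -/
def H1on (s : Set E3) (u : E3 → E3) : Prop :=
  Continuous u ∧ (∀ x ∈ s, DifferentiableAt ℝ u x) ∧
    IntegrableOn (fun x => ‖u x‖ ^ 2) s ∧
    IntegrableOn (fun x => ‖fderiv ℝ u x‖ ^ 2) s

/-- Admissible functions for the variational problems: `H¹` regularity on the perforated
domain (together with the `L⁴` integrability granting a finite Ginzburg–Landau term) and
the Dirichlet condition `u = U` on `∂Ω`. -/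
def Config.Adm (cfg : Config) (U : E3 → E3) (ε : ℝ) (u : E3 → E3) : Prop :=
  H1on (cfg.dom ε) u ∧ IntegrableOn (fun x => ‖u x‖ ^ 4) (cfg.dom ε) ∧
    Set.EqOn u U (frontier cfg.Ω)

/-- the inter-particle magnetic interaction is negligible. Let
`1 < α < 2` and `β₁` satisfy `6α + 2β₁ > 9`, and `K, m > 0`. Suppose each particle
`𝒫_j^ε` generates a field `H_j` with `|H_j(x)| ≤ K m ε^{β₁} Vol(𝒫_j^ε) |x − x_j^ε|⁻³`
for `|x − x_j^ε| ≥ dε/2`, and each particle `𝒫_i^ε` carries a magnetization density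
`m_i` with `|m_i| ≤ m ε^{β₁}` on `𝒫_i^ε`. Then there is `C > 0` independent of `ε` with
`Σ_{i≠j} ∫_{𝒫_i^ε} |H_j · m_i| dV ≤ C ε^{6α + 2β₁ − 9}`; in particular this sum tends
to `0` as `ε → 0⁺`. -/
theorem stmt17 (cfg : Config) (β₁ K m : ℝ)
    (hβ : 9 < 6 * cfg.α + 2 * β₁) (hK : 0 < K) (hm : 0 < m)
    (Hf : (ε : ℝ) → Fin (cfg.Nε ε) → E3 → E3)
    (mg : (ε : ℝ) → Fin (cfg.Nε ε) → E3 → E3)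
    (hHf : ∀ ε : ℝ, 0 < ε → ε < cfg.ε₀ → ∀ j, ∀ x : E3,
      cfg.d * ε / 2 ≤ dist x (cfg.xc ε j) →
      ‖Hf ε j x‖ ≤ K * m * ε ^ β₁ * (volume (cfg.particle ε j)).toReal /
        dist x (cfg.xc ε j) ^ (3 : ℕ))
    (hmg : ∀ ε : ℝ, 0 < ε → ε < cfg.ε₀ → ∀ i, ∀ x ∈ cfg.particle ε i,
      ‖mg ε i x‖ ≤ m * ε ^ β₁)
    (hmeas : ∀ ε : ℝ, 0 < ε → ε < cfg.ε₀ → ∀ i j,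
      AEStronglyMeasurable (fun x : E3 => (⟪Hf ε j x, mg ε i x⟫ : ℝ))
        (volume.restrict (cfg.particle ε i))) :
    ∃ C : ℝ, 0 < C ∧ ∃ ε₁ : ℝ, 0 < ε₁ ∧ ε₁ ≤ cfg.ε₀ ∧
      (∀ ε : ℝ, 0 < ε → ε < ε₁ →
        (∑ i : Fin (cfg.Nε ε), ∑ j : Fin (cfg.Nε ε),
            if i = j then 0 else
              ∫ x in cfg.particle ε i, |(⟪Hf ε j x, mg ε i x⟫ : ℝ)|) ≤
          C * ε ^ (6 * cfg.α + 2 * β₁ - 9)) ∧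
      Tendsto (fun ε =>
          ∑ i : Fin (cfg.Nε ε), ∑ j : Fin (cfg.Nε ε),
            if i = j then 0 else
              ∫ x in cfg.particle ε i, |(⟪Hf ε j x, mg ε i x⟫ : ℝ)|)
        (𝓝[>] (0 : ℝ)) (𝓝 0) := by
  classical
  have ha : 0 < cfg.a := cfg.hb.trans cfg.hba
  have hd0 : 0 < cfg.d := cfg.hd
  have hNN : 0 < cfg.NN := cfg.hNN
  set Bv : ℝ := (volume (Metric.ball (0:E3) 1)).toReal with hBvdef
  have hBv : 0 < Bv :=
    ENNReal.toReal_pos (Metric.measure_ball_pos volume 0 one_pos).ne' measure_ball_lt_top.ne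
  set γ : ℝ := 6 * cfg.α + 2 * β₁ - 9 with hγdef
  have hγ : 0 < γ := by simp only [hγdef]; linarith
  -- particle geometry
  have hcpt : ∀ (ε : ℝ), ∀ i, IsCompact (cfg.particle ε i) := by
    intro ε i
    exact (sphaux_compact cfg.b cfg.a cfg.hb cfg.hba).image
      (continuous_const.add ((continuous_const_smul _).comp (cfg.Rot ε i).continuous))
  have hsub : ∀ (ε : ℝ), 0 < ε → ∀ i,
      cfg.particle ε i ⊆ Metric.closedBall (cfg.xc ε i) (cfg.a * ε ^ cfg.α) := by
    intro ε hε i x hx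
    obtain ⟨y, hy, rfl⟩ := hx
    have hs : (0:ℝ) < ε ^ cfg.α := Real.rpow_pos_of_pos hε _
    have hny : ‖y‖ ≤ cfg.a := by
      simpa [Metric.mem_closedBall, dist_zero_right] using
        sphaux_subset cfg.b cfg.a cfg.hb cfg.hba hy
    have hdx : dist (cfg.xc ε i + ε ^ cfg.α • (cfg.Rot ε i) y) (cfg.xc ε i)
        = ε ^ cfg.α * ‖y‖ := by
      rw [dist_eq_norm]
      simp [norm_smul, abs_of_pos hs]
    rw [Metric.mem_closedBall, hdx]
    calc ε ^ cfg.α * ‖y‖ ≤ ε ^ cfg.α * cfg.a := by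
          exact mul_le_mul_of_nonneg_left hny hs.le
      _ = cfg.a * ε ^ cfg.α := mul_comm _ _
  have hvol : ∀ (ε : ℝ), 0 < ε → ∀ i,
      (volume (cfg.particle ε i)).toReal ≤ cfg.a ^ 3 * ε ^ (3 * cfg.α) * Bv := by
    intro ε hε i
    have hr : (0:ℝ) ≤ cfg.a * ε ^ cfg.α := by positivity
    have h1 : volume (cfg.particle ε i)
        ≤ volume (Metric.closedBall (cfg.xc ε i) (cfg.a * ε ^ cfg.α)) :=
      measure_mono (hsub ε hε i)
    have h2 : volume (Metric.closedBall (cfg.xc ε i) (cfg.a * ε ^ cfg.α))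
        = ENNReal.ofReal ((cfg.a * ε ^ cfg.α) ^ 3) * volume (Metric.ball (0:E3) 1) := by
      rw [MeasureTheory.Measure.addHaar_closedBall volume _ hr]
      norm_num
    have h3 : (volume (Metric.closedBall (cfg.xc ε i) (cfg.a * ε ^ cfg.α))).toReal
        = (cfg.a * ε ^ cfg.α) ^ 3 * Bv := by
      rw [h2, ENNReal.toReal_mul, ENNReal.toReal_ofReal (by positivity)]
    have h4 : (cfg.a * ε ^ cfg.α) ^ 3 = cfg.a ^ 3 * ε ^ (3 * cfg.α) := by
      rw [mul_pow, ← Real.rpow_natCast (ε ^ cfg.α) 3, ← Real.rpow_mul hε.le]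
      norm_num [mul_comm]
    calc (volume (cfg.particle ε i)).toReal
        ≤ (volume (Metric.closedBall (cfg.xc ε i) (cfg.a * ε ^ cfg.α))).toReal := by
          exact ENNReal.toReal_mono measure_closedBall_lt_top.ne h1
      _ = cfg.a ^ 3 * ε ^ (3 * cfg.α) * Bv := by rw [h3, h4]
  -- the threshold
  set ε₁ : ℝ := min cfg.ε₀ ((cfg.d / (2 * cfg.a)) ^ (cfg.α - 1)⁻¹) with hε₁def
  have hε₁pos : 0 < ε₁ := lt_min cfg.hε₀ (Real.rpow_pos_of_pos (by positivity) _)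
  have hε₁le : ε₁ ≤ cfg.ε₀ := min_le_left _ _
  have hαm : 0 < cfg.α - 1 := by linarith [cfg.hα1]
  have hαd : ∀ (ε : ℝ), 0 < ε → ε < ε₁ → cfg.a * ε ^ cfg.α ≤ cfg.d * ε / 2 := by
    intro ε hε hε'
    have h1 : ε < (cfg.d / (2 * cfg.a)) ^ (cfg.α - 1)⁻¹ := hε'.trans_le (min_le_right _ _)
    have h2 : ε ^ (cfg.α - 1) < cfg.d / (2 * cfg.a) := by
      have h3 := Real.rpow_lt_rpow hε.le h1 hαm
      rwa [← Real.rpow_mul (by positivity), inv_mul_cancel₀ hαm.ne', Real.rpow_one] at h3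
    have h4 : ε ^ cfg.α = ε ^ (cfg.α - 1) * ε := by
      rw [show cfg.α = (cfg.α - 1) + 1 by ring, Real.rpow_add hε, Real.rpow_one]
      ring_nf
    rw [h4]
    have h5 : cfg.a * ε ^ (cfg.α - 1) ≤ cfg.a * (cfg.d / (2 * cfg.a)) :=
      mul_le_mul_of_nonneg_left h2.le ha.le
    have h6 : cfg.a * (cfg.d / (2 * cfg.a)) = cfg.d / 2 := by field_simp
    calc cfg.a * (ε ^ (cfg.α - 1) * ε) = (cfg.a * ε ^ (cfg.α - 1)) * ε := by ring
      _ ≤ (cfg.d / 2) * ε := by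
          refine mul_le_mul_of_nonneg_right ?_ hε.le
          rw [← h6]; exact h5
      _ = cfg.d * ε / 2 := by ring
  -- the constant
  have key : ∀ (ε : ℝ), 0 < ε → ε < ε₁ →
      (∑ i : Fin (cfg.Nε ε), ∑ j : Fin (cfg.Nε ε),
          if i = j then 0 else
            ∫ x in cfg.particle ε i, |(⟪Hf ε j x, mg ε i x⟫ : ℝ)|) ≤
        cfg.NN ^ 2 * (cfg.a ^ 3 * Bv) ^ 2 * K * m ^ 2 * 8 / cfg.d ^ 3 * ε ^ γ := by
    intro ε hε hε'
    have hεε₀ : ε < cfg.ε₀ := hε'.trans_le hε₁le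
    have hs2 : cfg.a * ε ^ cfg.α ≤ cfg.d * ε / 2 := hαd ε hε hε'
    have hrp : (0:ℝ) < ε ^ (3 * cfg.α) := Real.rpow_pos_of_pos hε _
    have hrb : (0:ℝ) < ε ^ β₁ := Real.rpow_pos_of_pos hε _
    have hd3 : (0:ℝ) < (cfg.d * ε / 2) ^ 3 := by positivity
    have hterm : ∀ i j : Fin (cfg.Nε ε),
        (if i = j then 0 else ∫ x in cfg.particle ε i, |(⟪Hf ε j x, mg ε i x⟫ : ℝ)|) ≤
          (cfg.a ^ 3 * ε ^ (3 * cfg.α) * Bv) *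
            (K * m * ε ^ β₁ * (cfg.a ^ 3 * ε ^ (3 * cfg.α) * Bv) / (cfg.d * ε / 2) ^ 3 *
              (m * ε ^ β₁)) := by
      intro i j
      split
      · positivity
      next hij =>
        have hpt : ∀ x ∈ cfg.particle ε i, |(⟪Hf ε j x, mg ε i x⟫ : ℝ)| ≤
            K * m * ε ^ β₁ * (cfg.a ^ 3 * ε ^ (3 * cfg.α) * Bv) / (cfg.d * ε / 2) ^ 3 *
              (m * ε ^ β₁) := by
          intro x hx
          have hxi : dist x (cfg.xc ε i) ≤ cfg.a * ε ^ cfg.α := by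
            simpa [Metric.mem_closedBall] using hsub ε hε i hx
          have hxj : cfg.d * ε / 2 ≤ dist x (cfg.xc ε j) := by
            have h2 : cfg.d * ε ≤ dist (cfg.xc ε i) (cfg.xc ε j) :=
              cfg.hsep_lo ε hε hεε₀ i j hij
            have h3 := dist_triangle (cfg.xc ε i) x (cfg.xc ε j)
            rw [dist_comm (cfg.xc ε i) x] at h3
            linarith
          have hH := hHf ε hε hεε₀ j x hxj
          have hmgx := hmg ε hε hεε₀ i x hx
          have hdist3 : (cfg.d * ε / 2) ^ 3 ≤ dist x (cfg.xc ε j) ^ 3 :=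
            pow_le_pow_left₀ (by positivity) hxj 3
          have hHb : ‖Hf ε j x‖ ≤
              K * m * ε ^ β₁ * (cfg.a ^ 3 * ε ^ (3 * cfg.α) * Bv) / (cfg.d * ε / 2) ^ 3 := by
            refine hH.trans (div_le_div₀ (by positivity) ?_ hd3 hdist3)
            exact mul_le_mul_of_nonneg_left (hvol ε hε j) (by positivity)
          calc |(⟪Hf ε j x, mg ε i x⟫ : ℝ)| ≤ ‖Hf ε j x‖ * ‖mg ε i x‖ :=
                abs_real_inner_le_norm _ _
            _ ≤ K * m * ε ^ β₁ * (cfg.a ^ 3 * ε ^ (3 * cfg.α) * Bv) / (cfg.d * ε / 2) ^ 3 *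
                  (m * ε ^ β₁) :=
                mul_le_mul hHb hmgx (norm_nonneg _) (by positivity)
        have hPmeas : MeasurableSet (cfg.particle ε i) :=
          (hcpt ε i).isClosed.measurableSet
        have hPfin : volume (cfg.particle ε i) < ⊤ := (hcpt ε i).measure_lt_top
        have hint := integral_mono_of_nonneg
          (ae_of_all _ fun x => abs_nonneg ((⟪Hf ε j x, mg ε i x⟫ : ℝ)))
          (integrableOn_const hPfin.ne enorm_ne_top)
          (ae_restrict_of_forall_mem hPmeas hpt)
        rw [setIntegral_const, smul_eq_mul] at hint
        refine hint.trans ?_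
        exact mul_le_mul_of_nonneg_right (hvol ε hε i) (by positivity)
    calc (∑ i : Fin (cfg.Nε ε), ∑ j : Fin (cfg.Nε ε),
          if i = j then 0 else ∫ x in cfg.particle ε i, |(⟪Hf ε j x, mg ε i x⟫ : ℝ)|)
        ≤ ∑ _i : Fin (cfg.Nε ε), ∑ _j : Fin (cfg.Nε ε),
            (cfg.a ^ 3 * ε ^ (3 * cfg.α) * Bv) *
              (K * m * ε ^ β₁ * (cfg.a ^ 3 * ε ^ (3 * cfg.α) * Bv) / (cfg.d * ε / 2) ^ 3 *
                (m * ε ^ β₁)) :=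
          Finset.sum_le_sum fun i _ => Finset.sum_le_sum fun j _ => hterm i j
      _ = (cfg.Nε ε : ℝ) ^ 2 * ((cfg.a ^ 3 * ε ^ (3 * cfg.α) * Bv) *
              (K * m * ε ^ β₁ * (cfg.a ^ 3 * ε ^ (3 * cfg.α) * Bv) / (cfg.d * ε / 2) ^ 3 *
                (m * ε ^ β₁))) := by
          simp [Finset.sum_const, Finset.card_univ]
          ring
      _ ≤ (cfg.NN * ε⁻¹ ^ 3) ^ 2 * ((cfg.a ^ 3 * ε ^ (3 * cfg.α) * Bv) *
              (K * m * ε ^ β₁ * (cfg.a ^ 3 * ε ^ (3 * cfg.α) * Bv) / (cfg.d * ε / 2) ^ 3 *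
                (m * ε ^ β₁))) := by
          refine mul_le_mul_of_nonneg_right ?_ (by positivity)
          exact pow_le_pow_left₀ (Nat.cast_nonneg _) (cfg.hcount ε hε hεε₀) 2
      _ = cfg.NN ^ 2 * (cfg.a ^ 3 * Bv) ^ 2 * K * m ^ 2 * 8 / cfg.d ^ 3 * ε ^ γ := by
          have heγ : ε ^ γ = (ε ^ (3 * cfg.α)) ^ (2:ℕ) * (ε ^ β₁) ^ (2:ℕ) / ε ^ (9:ℕ) := by
            rw [← Real.rpow_natCast (ε ^ (3 * cfg.α)) 2, ← Real.rpow_natCast (ε ^ β₁) 2,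
              ← Real.rpow_natCast ε 9, ← Real.rpow_mul hε.le, ← Real.rpow_mul hε.le,
              ← Real.rpow_add hε, ← Real.rpow_sub hε]
            congr 1
            push_cast
            simp only [hγdef]
            ring
          rw [heγ]
          field_simp
          ring
  refine ⟨cfg.NN ^ 2 * (cfg.a ^ 3 * Bv) ^ 2 * K * m ^ 2 * 8 / cfg.d ^ 3, by positivity,
    ε₁, hε₁pos, hε₁le, key, ?_⟩
  have hg0 : Tendsto (fun ε : ℝ =>
      cfg.NN ^ 2 * (cfg.a ^ 3 * Bv) ^ 2 * K * m ^ 2 * 8 / cfg.d ^ 3 * ε ^ γ)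
      (𝓝[>] (0:ℝ)) (𝓝 0) := by
    have h1 : Tendsto (fun x : ℝ => x ^ γ) (𝓝[>] (0:ℝ)) (𝓝 0) := by
      have h2 := (Real.continuousAt_rpow_const 0 γ (Or.inr hγ.le)).tendsto
      rw [Real.zero_rpow hγ.ne'] at h2
      exact h2.mono_left nhdsWithin_le_nhds
    simpa using tendsto_const_nhds.mul h1
  refine squeeze_zero' ?_ ?_ hg0
  · filter_upwards [self_mem_nhdsWithin] with ε _
    refine Finset.sum_nonneg fun i _ => Finset.sum_nonneg fun j _ => ?_
    split
    · exact le_refl 0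
    · exact integral_nonneg fun x => abs_nonneg _
  · filter_upwards [Ioo_mem_nhdsGT_of_mem (by exact ⟨le_refl 0, hε₁pos⟩ : (0:ℝ) ∈ Set.Ico 0 ε₁)]
      with ε hε using key ε hε.1 hε.2
end
end
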